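/- For every β > 0 there exist constants C > 0 and γ > 0 such that the function ρ_β : ℝ → ℝ, defined by ρ_β(y) = exp(β y² / (y² − 1)) for |y| < 1 and ρ_β(y) = 0 for |y| ≥ 1, satisfies the Gevrey-2 derivative bounds |ρ_β^{(k)}(y)| ≤ C · γ^k · (k!)² for every y ∈ ℝ and every natural number k. -/

import Mathlib

/-- The compactly supported Gevrey cutoff `ρ_β(y) = exp(βy²/(y²−1))` for `|y| < 1`,
extended by `0` for `|y| ≥ 1`. -/
noncomputable def rhoCutoff (β : ℝ) (y : ℝ) : ℝ :=
  if |y| < 1 then Real.exp (β * y ^ 2 / (y ^ 2 - 1)) else 0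

namespace RhoAux

open Real Metric Set

/-- The complex extension of the cutoff on the unit interval. -/
noncomputable def Fc (β : ℝ) (z : ℂ) : ℂ := Complex.exp (β * z ^ 2 / (z ^ 2 - 1))

/-- Cauchy estimates for iterated derivatives. -/
lemma cauchy_bound {f : ℂ → ℂ} {c : ℂ} {R M : ℝ} (hR : 0 < R)
    (hd : DifferentiableOn ℂ f (Metric.closedBall c R))
    (hM : ∀ z ∈ Metric.sphere c R, ‖f z‖ ≤ M) (n : ℕ) :
    ‖iteratedDeriv n f c‖ ≤ n.factorial * M / R ^ n := by
  lift R to NNReal using hR.le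
  have hR' : 0 < R := by exact_mod_cast hR
  have hps : HasFPowerSeriesOnBall f (cauchyPowerSeries f c R) c R :=
    hd.hasFPowerSeriesOnBall hR'
  set p := cauchyPowerSeries f c R with hp
  have h1 : iteratedDeriv n f c = n.factorial • (p n fun _ => (1 : ℂ)) := by
    rw [iteratedDeriv_eq_iteratedFDeriv, ← hps.factorial_smul 1 n]
  have h2 : ‖p n fun _ => (1 : ℂ)‖ ≤ ‖p n‖ := by
    calc ‖p n fun _ => (1 : ℂ)‖ ≤ ‖p n‖ * ∏ _i : Fin n, ‖(1 : ℂ)‖ := (p n).le_opNorm _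
      _ = ‖p n‖ := by simp
  have hM0 : 0 ≤ M :=
    le_trans (norm_nonneg _) (hM _ (circleMap_mem_sphere c (by exact_mod_cast hR.le) 0))
  have h3 : ‖p n‖ ≤ M * ((R : ℝ)⁻¹) ^ n := by
    have hcont : Continuous fun θ : ℝ => ‖f (circleMap c R θ)‖ :=
      (hd.continuousOn.comp_continuous (continuous_circleMap c R)
        fun θ => sphere_subset_closedBall (circleMap_mem_sphere c (by exact_mod_cast hR.le) θ)).norm
    have hint : (∫ θ in (0:ℝ)..2 * π, ‖f (circleMap c R θ)‖) ≤ 2 * π * M := by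
      calc (∫ θ in (0:ℝ)..2 * π, ‖f (circleMap c R θ)‖)
          ≤ ∫ _θ in (0:ℝ)..2 * π, M := by
            apply intervalIntegral.integral_mono_on Real.two_pi_pos.le
              (hcont.intervalIntegrable 0 (2 * π)) intervalIntegrable_const
            intro θ _
            exact hM _ (circleMap_mem_sphere c (by exact_mod_cast hR.le) θ)
        _ = 2 * π * M := by simp [mul_comm]
    have hkey : (2 * π)⁻¹ * ∫ θ in (0:ℝ)..2 * π, ‖f (circleMap c R θ)‖ ≤ M := by
      calc (2 * π)⁻¹ * ∫ θ in (0:ℝ)..2 * π, ‖f (circleMap c R θ)‖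
          ≤ (2 * π)⁻¹ * (2 * π * M) := by
            apply mul_le_mul_of_nonneg_left hint (by positivity)
        _ = M := by field_simp
    calc ‖p n‖ ≤ ((2 * π)⁻¹ * ∫ θ in (0:ℝ)..2 * π, ‖f (circleMap c R θ)‖) * |(R:ℝ)|⁻¹ ^ n :=
          norm_cauchyPowerSeries_le f c R n
      _ ≤ M * |(R:ℝ)|⁻¹ ^ n := by
          apply mul_le_mul_of_nonneg_right hkey (by positivity)
      _ = M * ((R : ℝ)⁻¹) ^ n := by rw [abs_of_nonneg (by exact_mod_cast hR.le : (0:ℝ) ≤ (R:ℝ))]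
  have h4 : ‖iteratedDeriv n f c‖ = n.factorial * ‖p n fun _ => (1 : ℂ)‖ := by
    rw [h1, nsmul_eq_mul, norm_mul]
    simp
  rw [h4]
  calc (n.factorial : ℝ) * ‖p n fun _ => (1 : ℂ)‖
      ≤ n.factorial * (M * ((R : ℝ)⁻¹) ^ n) := by
        apply mul_le_mul_of_nonneg_left (h2.trans h3) (by positivity)
    _ = n.factorial * M / (R : ℝ) ^ n := by
        rw [inv_pow, div_eq_mul_inv]; ring

/-- Estimates on the closed ball of radius `(1-y²)/4` about `y`. -/
lemma ball_est (β : ℝ) (hβ : 0 < β) {y : ℝ} (hy : |y| < 1) {z : ℂ}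
    (hz : z ∈ Metric.closedBall (y : ℂ) ((1 - y ^ 2) / 4)) :
    z ^ 2 ≠ 1 ∧ ‖Fc β z‖ ≤ Real.exp (β - (112 * β / 625) / (1 - y ^ 2)) := by
  have hya : 0 ≤ |y| := abs_nonneg y
  have hsq : y ^ 2 = |y| ^ 2 := (sq_abs y).symm
  have hd : 0 < 1 - y ^ 2 := by nlinarith
  have hd1 : 1 - y ^ 2 ≤ 1 := by nlinarith [sq_nonneg y]
  set d := 1 - y ^ 2 with hddef
  rw [Metric.mem_closedBall, Complex.dist_eq] at hz
  have h1 : ‖z + (y : ℂ)‖ ≤ 9 / 4 := by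
    have e : z + (y : ℂ) = (z - y) + 2 * (y : ℂ) := by ring
    rw [e]
    refine le_trans (norm_add_le _ _) ?_
    have h2y : ‖2 * (y : ℂ)‖ = 2 * |y| := by
      rw [norm_mul, Complex.norm_two, Complex.norm_real, Real.norm_eq_abs]
    rw [h2y]
    have : d / 4 ≤ 1 / 4 := by linarith
    nlinarith
  have h2 : ‖z ^ 2 - (y : ℂ) ^ 2‖ ≤ 9 * d / 16 := by
    have e : z ^ 2 - (y : ℂ) ^ 2 = (z - y) * (z + y) := by ring
    rw [e, norm_mul]
    calc ‖z - y‖ * ‖z + y‖ ≤ (d / 4) * (9 / 4) := by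
          apply mul_le_mul hz h1 (norm_nonneg _) (by positivity)
      _ = 9 * d / 16 := by ring
  have h3 : (z ^ 2 - 1).re ≤ -(7 * d / 16) := by
    have e : z ^ 2 - 1 = (z ^ 2 - (y : ℂ) ^ 2) + (((y ^ 2 - 1 : ℝ)) : ℂ) := by push_cast; ring
    rw [e, Complex.add_re, Complex.ofReal_re]
    have hre := Complex.re_le_norm (z ^ 2 - (y : ℂ) ^ 2)
    have : y ^ 2 - 1 = -d := by rw [hddef]; ring
    rw [this]
    linarith
  have hne : z ^ 2 ≠ 1 := by
    intro h
    rw [h, sub_self, Complex.zero_re] at h3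
    linarith
  refine ⟨hne, ?_⟩
  have h4 : ‖z ^ 2 - 1‖ ≤ 25 * d / 16 := by
    have e : z ^ 2 - 1 = (z ^ 2 - (y : ℂ) ^ 2) + (((y ^ 2 - 1 : ℝ)) : ℂ) := by push_cast; ring
    rw [e]
    refine le_trans (norm_add_le _ _) ?_
    rw [Complex.norm_real, Real.norm_eq_abs]
    have : |y ^ 2 - 1| = d := by rw [abs_of_nonpos (by linarith), hddef]; ring
    rw [this]; linarith
  have hns0 : 0 < Complex.normSq (z ^ 2 - 1) :=
    Complex.normSq_pos.mpr (sub_ne_zero.mpr hne)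
  have hns : Complex.normSq (z ^ 2 - 1) ≤ (25 * d / 16) ^ 2 := by
    rw [← Complex.sq_norm]
    nlinarith [norm_nonneg (z ^ 2 - 1)]
  have h5 : ((z ^ 2 - 1)⁻¹).re ≤ -(112 / 625) / d := by
    rw [Complex.inv_re]
    have step : (z ^ 2 - 1).re / Complex.normSq (z ^ 2 - 1) ≤ (-(7 * d / 16)) / ((25 * d / 16) ^ 2) := by
      rw [div_le_div_iff₀ hns0 (by positivity)]
      nlinarith
    refine step.trans (le_of_eq ?_)
    field_simp
    ring
  have hwre : ((β : ℂ) * z ^ 2 / (z ^ 2 - 1)).re ≤ β - (112 * β / 625) / d := by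
    have hu : z ^ 2 - 1 ≠ 0 := sub_ne_zero.mpr hne
    have hw : (β : ℂ) * z ^ 2 / (z ^ 2 - 1) = β + β * (z ^ 2 - 1)⁻¹ := by
      field_simp
      ring
    rw [hw, Complex.add_re, Complex.ofReal_re, Complex.re_ofReal_mul]
    have := mul_le_mul_of_nonneg_left h5 hβ.le
    calc β + β * ((z ^ 2 - 1)⁻¹).re ≤ β + β * (-(112 / 625) / d) := by linarith
      _ = β - (112 * β / 625) / d := by ring
  have : ‖Fc β z‖ = Real.exp (((β : ℂ) * z ^ 2 / (z ^ 2 - 1)).re) := by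
    rw [Fc, Complex.norm_exp]
  rw [this]
  exact Real.exp_le_exp.mpr hwre

/-- On `(-1,1)` the iterated derivatives of the real cutoff are real parts of the
iterated derivatives of the complex extension. -/
lemma real_eq (β : ℝ) (hβ : 0 < β) :
    ∀ k : ℕ, ∀ y : ℝ, |y| < 1 →
      iteratedDeriv k (rhoCutoff β) y = (iteratedDeriv k (Fc β) y).re := by
  have hU : IsOpen {z : ℂ | z ^ 2 ≠ 1} := isOpen_ne.preimage (continuous_pow 2)
  have hdiffAt : ∀ z : ℂ, z ^ 2 ≠ 1 → DifferentiableAt ℂ (Fc β) z := by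
    intro z hz
    have h1 : DifferentiableAt ℂ (fun z : ℂ => (β : ℂ) * z ^ 2 / (z ^ 2 - 1)) z :=
      ((differentiableAt_const _).mul (differentiableAt_pow 2)).div
        ((differentiableAt_pow 2).sub_const 1) (sub_ne_zero.mpr hz)
    exact h1.cexp
  have hdiff : DifferentiableOn ℂ (Fc β) {z : ℂ | z ^ 2 ≠ 1} := fun z hz =>
    (hdiffAt z hz).differentiableWithinAt
  have hAn : ∀ k : ℕ, AnalyticOnNhd ℂ (iteratedDeriv k (Fc β)) {z : ℂ | z ^ 2 ≠ 1} := by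
    intro k
    induction k with
    | zero => simpa [iteratedDeriv_zero] using hdiff.analyticOnNhd hU
    | succ k ih =>
        rw [iteratedDeriv_succ]
        exact ih.deriv
  intro k
  induction k with
  | zero =>
      intro y hy
      have h2 : y ^ 2 < 1 := by nlinarith [sq_abs y, abs_nonneg y]
      rw [iteratedDeriv_zero, iteratedDeriv_zero, rhoCutoff, if_pos hy, Fc]
      have e : ((β : ℂ) * (y : ℂ) ^ 2 / ((y : ℂ) ^ 2 - 1)) = ((β * y ^ 2 / (y ^ 2 - 1) : ℝ) : ℂ) := by
        push_cast; ring
      rw [e, ← Complex.ofReal_exp, Complex.ofReal_re]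
  | succ k ih =>
      intro y hy
      have h2 : y ^ 2 < 1 := by nlinarith [sq_abs y, abs_nonneg y]
      have hmem : ((y : ℂ)) ^ 2 ≠ 1 := by
        intro h
        have : ((y ^ 2 : ℝ) : ℂ) = ((1 : ℝ) : ℂ) := by push_cast; exact_mod_cast h
        have : y ^ 2 = 1 := by exact_mod_cast this
        linarith
      have hev : ∀ᶠ x : ℝ in nhds y, |x| < 1 :=
        continuous_abs.continuousAt.eventually_lt continuousAt_const hy
      have heq : iteratedDeriv k (rhoCutoff β) =ᶠ[nhds y]
          fun x : ℝ => (iteratedDeriv k (Fc β) x).re :=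
        hev.mono fun x hx => ih x hx
      rw [iteratedDeriv_succ, heq.deriv_eq]
      have hG : HasDerivAt (iteratedDeriv k (Fc β))
          (deriv (iteratedDeriv k (Fc β)) (y : ℂ)) (y : ℂ) :=
        ((hAn k) (y : ℂ) hmem).differentiableAt.hasDerivAt
      rw [hG.real_of_complex.deriv, iteratedDeriv_succ]

lemma rho_eq_glue (β : ℝ) (hβ : 0 < β) :
    rhoCutoff β = fun y : ℝ => Real.exp β * expNegInvGlue ((1 - y ^ 2) / β) := by
  funext y
  rw [rhoCutoff]
  by_cases h : |y| < 1
  · have h2 : y ^ 2 < 1 := by nlinarith [sq_abs y, abs_nonneg y]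
    have hpos : 0 < (1 - y ^ 2) / β := div_pos (by linarith) hβ
    rw [if_pos h, expNegInvGlue, if_neg (not_le.mpr hpos), ← Real.exp_add]
    congr 1
    have hne1 : y ^ 2 - 1 ≠ 0 := by nlinarith
    have hne2 : 1 - y ^ 2 ≠ 0 := by nlinarith
    field_simp
    ring
  · have h2 : 1 ≤ y ^ 2 := by nlinarith [sq_abs y, abs_nonneg y, not_lt.mp h]
    have hnp : (1 - y ^ 2) / β ≤ 0 := div_nonpos_of_nonpos_of_nonneg (by linarith) hβ.le
    rw [if_neg h, expNegInvGlue.zero_of_nonpos hnp, mul_zero]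

lemma rho_contDiff (β : ℝ) (hβ : 0 < β) : ContDiff ℝ (⊤ : ℕ∞) (rhoCutoff β) := by
  rw [rho_eq_glue β hβ]
  exact contDiff_const.mul (expNegInvGlue.contDiff.comp
    ((contDiff_const.sub (contDiff_id.pow 2)).div_const β))

end RhoAux

/-- Gevrey-2 regularity of the cutoff `ρ_β`: for every `β > 0` there are `C, γ > 0`
such that `|ρ_β^{(k)}(y)| ≤ C·γ^k·(k!)²` for every `y ∈ ℝ` and every `k ∈ ℕ`. -/
theorem rhoCutoff_gevrey_two (β : ℝ) (hβ : 0 < β) :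
    ∃ C γ : ℝ, 0 < C ∧ 0 < γ ∧
      ∀ (k : ℕ) (y : ℝ),
        |iteratedDeriv k (rhoCutoff β) y| ≤ C * γ ^ k * ((k.factorial : ℝ)) ^ 2 := by
  classical
  set b : ℝ := 112 * β / 625 with hbdef
  have hb0 : 0 < b := by rw [hbdef]; positivity
  refine ⟨Real.exp β, 4 / b, Real.exp_pos β, by positivity, ?_⟩
  intro k y
  have hsm : ContDiff ℝ (⊤ : ℕ∞) (rhoCutoff β) := RhoAux.rho_contDiff β hβ
  have hcont : Continuous (iteratedDeriv k (rhoCutoff β)) :=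
    hsm.continuous_iteratedDeriv k (by exact_mod_cast le_top)
  rcases lt_or_ge |y| 1 with hy | hy
  · -- interior case
    have hd : 0 < 1 - y ^ 2 := by nlinarith [sq_abs y, abs_nonneg y]
    have hd1 : 1 - y ^ 2 ≤ 1 := by nlinarith [sq_nonneg y]
    set d : ℝ := 1 - y ^ 2 with hddef
    have hM : ∀ z ∈ Metric.sphere (y : ℂ) (d / 4), ‖RhoAux.Fc β z‖ ≤ Real.exp (β - b / d) :=
      fun z hz => (RhoAux.ball_est β hβ hy (Metric.sphere_subset_closedBall hz)).2
    have hdiff : DifferentiableOn ℂ (RhoAux.Fc β) (Metric.closedBall (y : ℂ) (d / 4)) := by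
      intro z hz
      have hne := (RhoAux.ball_est β hβ hy hz).1
      have h1 : DifferentiableAt ℂ (fun z : ℂ => (β : ℂ) * z ^ 2 / (z ^ 2 - 1)) z :=
        ((differentiableAt_const _).mul (differentiableAt_pow 2)).div
          ((differentiableAt_pow 2).sub_const 1) (sub_ne_zero.mpr hne)
      exact h1.cexp.differentiableWithinAt
    have hC := RhoAux.cauchy_bound (by positivity : 0 < d / 4) hdiff hM k
    rw [RhoAux.real_eq β hβ k y hy]
    have hx0 : 0 < b / d := by positivity
    have key : (b / d) ^ k ≤ k.factorial * Real.exp (b / d) := by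
      have h := Real.pow_div_factorial_le_exp (b / d) hx0.le k
      rw [div_le_iff₀ (by positivity : (0:ℝ) < (k.factorial : ℝ))] at h
      linarith
    have key2 : Real.exp (-(b / d)) * (b / d) ^ k ≤ k.factorial := by
      have h1 : Real.exp (-(b / d)) * (b / d) ^ k
          ≤ Real.exp (-(b / d)) * (k.factorial * Real.exp (b / d)) :=
        mul_le_mul_of_nonneg_left key (Real.exp_pos _).le
      have h2 : Real.exp (-(b / d)) * ((k.factorial : ℝ) * Real.exp (b / d)) = k.factorial := by
        rw [mul_comm ((k.factorial : ℝ)) (Real.exp (b / d)), ← mul_assoc, ← Real.exp_add]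
        simp
      linarith
    have key3 : Real.exp (-(b / d)) ≤ k.factorial * (d / b) ^ k := by
      have hpow : (0:ℝ) < (d / b) ^ k := pow_pos (by positivity) k
      have h2 := mul_le_mul_of_nonneg_right key2 hpow.le
      have h3 : Real.exp (-(b / d)) * (b / d) ^ k * (d / b) ^ k = Real.exp (-(b / d)) := by
        rw [mul_assoc, ← mul_pow]
        rw [show (b / d) * (d / b) = 1 by field_simp]
        simp
      linarith
    calc |(iteratedDeriv k (RhoAux.Fc β) (y : ℂ)).re|
        ≤ ‖iteratedDeriv k (RhoAux.Fc β) (y : ℂ)‖ := Complex.abs_re_le_norm _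
      _ ≤ k.factorial * Real.exp (β - b / d) / (d / 4) ^ k := hC
      _ ≤ Real.exp β * (4 / b) ^ k * (k.factorial : ℝ) ^ 2 := by
          rw [div_le_iff₀ (by positivity : (0:ℝ) < (d / 4) ^ k)]
          have expand : Real.exp (β - b / d) = Real.exp β * Real.exp (-(b / d)) := by
            rw [← Real.exp_add]; ring_nf
          rw [expand]
          have h5 : ((d : ℝ) / b) ^ k = (4 / b) ^ k * (d / 4) ^ k := by
            rw [← mul_pow]
            congr 1
            field_simp
          calc (k.factorial : ℝ) * (Real.exp β * Real.exp (-(b / d)))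
              = Real.exp β * (k.factorial : ℝ) * Real.exp (-(b / d)) := by ring
            _ ≤ Real.exp β * (k.factorial : ℝ) * ((k.factorial : ℝ) * (d / b) ^ k) :=
                mul_le_mul_of_nonneg_left key3 (by positivity)
            _ = Real.exp β * (4 / b) ^ k * (k.factorial : ℝ) ^ 2 * (d / 4) ^ k := by
                rw [h5]; ring
  · -- exterior case: the derivative vanishes
    have hz : iteratedDeriv k (rhoCutoff β) y = 0 := by
      have hEq : Set.EqOn (iteratedDeriv k (rhoCutoff β)) (fun _ => (0:ℝ)) {x : ℝ | 1 < |x|} := by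
        intro x hx
        have hev : ∀ᶠ t : ℝ in nhds x, 1 < |t| :=
          continuousAt_const.eventually_lt continuous_abs.continuousAt hx
        have hfe : rhoCutoff β =ᶠ[nhds x] fun _ => (0:ℝ) :=
          hev.mono fun t ht => by simp [rhoCutoff, not_lt.mpr ht.le]
        have h0 : iteratedDeriv k (rhoCutoff β) x = iteratedDeriv k (fun _ => (0:ℝ)) x :=
          Filter.EventuallyEq.iteratedDeriv_eq k hfe
        rw [h0, iteratedDeriv_eq_iteratedFDeriv, iteratedFDeriv_zero_fun]
        simp
      have hcl : Set.EqOn (iteratedDeriv k (rhoCutoff β)) (fun _ => (0:ℝ))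
          (closure {x : ℝ | 1 < |x|}) := hEq.closure hcont continuous_const
      have hmem : y ∈ closure {x : ℝ | 1 < |x|} := by
        rcases lt_or_eq_of_le hy with h | h
        · exact subset_closure h
        · rcases (abs_eq (by norm_num : (0:ℝ) ≤ 1)).mp h.symm with rfl | rfl
          · have hsub : Set.Ioi (1:ℝ) ⊆ {x : ℝ | 1 < |x|} := fun x hx =>
              lt_of_lt_of_le hx (le_abs_self x)
            have := closure_mono hsub
            rw [closure_Ioi] at this
            exact this Set.self_mem_Ici
          · have hsub : Set.Iio (-1:ℝ) ⊆ {x : ℝ | 1 < |x|} := fun x hx => by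
              have : 1 < -x := by linarith [Set.mem_Iio.mp hx]
              exact lt_of_lt_of_le this (neg_le_abs x)
            have := closure_mono hsub
            rw [closure_Iio] at this
            exact this Set.self_mem_Iic
      exact hcl hmem
    rw [hz, abs_zero]
    positivity
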